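/- Let a < b be real numbers, set A = (b − a)/2, δ = (a + b)/2, let P > 0, set α = P/(2π), let M be a positive even integer, and let c_m ∈ ℂ for −M/2 ≤ m ≤ M/2 − 1. Define F : ℝ → ℂ by F(ω) = Σ_{m=−M/2}^{M/2−1} c_m e^{i(2π/P)·m·(ω−δ)}. Then for every t ∈ ℝ such that αt − m ≠ 0 for every index m with −M/2 ≤ m ≤ M/2 − 1, one has ∫_a^b F(ω) e^{−iωt} dω = e^{−iδt} · Σ_{m=−M/2}^{M/2−1} c_m · (P/(π(αt − m))) · sin(π·(2A/P)·(αt − m)). -/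

import Mathlib

lemma key (a b δ A t k : ℝ) (hA : A = (b - a) / 2) (hδ : δ = (a + b) / 2)
    (hu : k - t ≠ 0) :
    ∫ ω in a..b, Complex.exp (Complex.I * (k * (ω - δ) : ℝ)) *
        Complex.exp (-(Complex.I * (ω * t : ℝ))) =
      Complex.exp (-(Complex.I * (δ * t : ℝ))) *
        ((2 * Real.sin (A * (k - t)) / (k - t) : ℝ) : ℂ) := by
  have hu' : ((k : ℂ) - t) ≠ 0 := by
    exact_mod_cast fun h => hu (by exact_mod_cast h)
  have hc : (Complex.I * ((k : ℂ) - t)) ≠ 0 := mul_ne_zero Complex.I_ne_zero hu'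
  have step1 : ∀ ω : ℝ, Complex.exp (Complex.I * (k * (ω - δ) : ℝ)) *
        Complex.exp (-(Complex.I * (ω * t : ℝ))) =
      Complex.exp (-(Complex.I * (k * δ : ℝ))) *
        Complex.exp ((Complex.I * ((k : ℂ) - t)) * ω) := by
    intro ω
    rw [← Complex.exp_add, ← Complex.exp_add]
    push_cast
    ring_nf
  rw [intervalIntegral.integral_congr (fun ω _ => step1 ω),
    intervalIntegral.integral_const_mul, integral_exp_mul_complex hc]
  have hb : (b : ℝ) = δ + A := by rw [hA, hδ]; ring
  have ha : (a : ℝ) = δ - A := by rw [hA, hδ]; ring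
  rw [hb, ha]
  push_cast
  rw [Complex.sin]
  rw [show Complex.I * ((k:ℂ) - t) * ((δ:ℂ) + A)
      = (Complex.I * ((k:ℂ) - t) * δ) + (Complex.I * ((k:ℂ) - t) * A) from by ring,
    show Complex.I * ((k:ℂ) - t) * ((δ:ℂ) - A)
      = (Complex.I * ((k:ℂ) - t) * δ) + (-(Complex.I * ((k:ℂ) - t) * A)) from by ring,
    Complex.exp_add, Complex.exp_add]
  have e1 : Complex.exp (-(Complex.I * ((k:ℂ) * δ))) *
      Complex.exp (Complex.I * ((k:ℂ) - t) * δ) =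
      Complex.exp (-(Complex.I * ((δ:ℂ) * t))) := by
    rw [← Complex.exp_add]; congr 1; ring
  have e2 : -((A:ℂ) * ((k:ℂ) - t)) * Complex.I = -(Complex.I * ((k:ℂ) - t) * A) := by ring
  have e3 : ((A:ℂ) * ((k:ℂ) - t)) * Complex.I = Complex.I * ((k:ℂ) - t) * A := by ring
  rw [e2, e3]
  set E1 := Complex.exp (Complex.I * ((k:ℂ) - t) * A)
  set E2 := Complex.exp (-(Complex.I * ((k:ℂ) - t) * A))
  rw [mul_div_assoc] at *
  calc Complex.exp (-(Complex.I * ((k:ℂ) * δ))) *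
        ((Complex.exp (Complex.I * ((k:ℂ) - t) * δ) * E1 -
          Complex.exp (Complex.I * ((k:ℂ) - t) * δ) * E2) / (Complex.I * ((k:ℂ) - t)))
      = Complex.exp (-(Complex.I * ((δ:ℂ) * t))) * ((E1 - E2) / (Complex.I * ((k:ℂ)-t))) := by
        rw [← e1]; ring
    _ = Complex.exp (-(Complex.I * ((δ:ℂ) * t))) * (2 * ((E2 - E1) * Complex.I / 2) / ((k:ℂ) - t)) := by
        congr 1
        field_simp
        linear_combination (E1 - E2) * Complex.I_sq
    _ = Complex.exp (-(Complex.I * ((δ:ℂ) * t))) * (2 * ((E2 - E1) * Complex.I / 2 / ((k:ℂ) - t))) := by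
        ring

/-- exact term-by-term integration of a trigonometric polynomial of
period P against the oscillatory Fourier kernel on [a,b] yields the sinc-kernel sum. -/
theorem stmt_9 (a b : ℝ) (hab : a < b) (A δ P α : ℝ)
    (hA : A = (b - a) / 2) (hδ : δ = (a + b) / 2) (hP : 0 < P)
    (hα : α = P / (2 * Real.pi))
    (M : ℕ) (hM : 0 < M) (hMeven : Even M) (c : ℤ → ℂ)
    (F : ℝ → ℂ)
    (hF : ∀ ω : ℝ, F ω = ∑ m ∈ Finset.Icc (-(M : ℤ) / 2) ((M : ℤ) / 2 - 1),
      c m * Complex.exp (Complex.I * ((2 * Real.pi / P) * (m : ℝ) * (ω - δ) : ℝ)))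
    (t : ℝ)
    (ht : ∀ m ∈ Finset.Icc (-(M : ℤ) / 2) ((M : ℤ) / 2 - 1), α * t - (m : ℝ) ≠ 0) :
    ∫ ω in a..b, F ω * Complex.exp (-(Complex.I * (ω * t : ℝ))) =
      Complex.exp (-(Complex.I * (δ * t : ℝ))) *
        ∑ m ∈ Finset.Icc (-(M : ℤ) / 2) ((M : ℤ) / 2 - 1),
          c m * (((P / (Real.pi * (α * t - (m : ℝ)))) *
            Real.sin (Real.pi * (2 * A / P) * (α * t - (m : ℝ))) : ℝ) : ℂ) := by
  have hπ : Real.pi ≠ 0 := Real.pi_ne_zero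
  have hP' : P ≠ 0 := ne_of_gt hP
  set S := Finset.Icc (-(M : ℤ) / 2) ((M : ℤ) / 2 - 1) with hS
  have hu : ∀ m ∈ S, (2 * Real.pi / P) * (m : ℝ) - t ≠ 0 := by
    intro m hm h
    apply ht m hm
    have : α * t - (m : ℝ) = -(P / (2 * Real.pi)) * ((2 * Real.pi / P) * (m : ℝ) - t) := by
      rw [hα]; field_simp; ring
    rw [this, h, mul_zero]
  have h1 : ∀ ω : ℝ, F ω * Complex.exp (-(Complex.I * (ω * t : ℝ))) =
      ∑ m ∈ S, c m * (Complex.exp (Complex.I * (((2 * Real.pi / P) * (m : ℝ)) * (ω - δ) : ℝ)) *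
        Complex.exp (-(Complex.I * (ω * t : ℝ)))) := by
    intro ω
    rw [hF, Finset.sum_mul]
    exact Finset.sum_congr rfl fun m _ => (mul_assoc _ _ _)
  have hint : ∀ m ∈ S, IntervalIntegrable (fun ω : ℝ =>
      c m * (Complex.exp (Complex.I * (((2 * Real.pi / P) * (m : ℝ)) * (ω - δ) : ℝ)) *
        Complex.exp (-(Complex.I * (ω * t : ℝ))))) MeasureTheory.volume a b := by
    intro m _
    apply Continuous.intervalIntegrable
    fun_prop
  rw [intervalIntegral.integral_congr (fun ω _ => h1 ω),
    intervalIntegral.integral_finset_sum hint, Finset.mul_sum]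
  refine Finset.sum_congr rfl fun m hm => ?_
  rw [intervalIntegral.integral_const_mul,
    key a b δ A t ((2 * Real.pi / P) * (m : ℝ)) hA hδ (hu m hm)]
  have hsin : (2 * Real.sin (A * ((2 * Real.pi / P) * (m : ℝ) - t)) /
      ((2 * Real.pi / P) * (m : ℝ) - t) : ℝ) =
      (P / (Real.pi * (α * t - (m : ℝ)))) *
        Real.sin (Real.pi * (2 * A / P) * (α * t - (m : ℝ))) := by
    have harg : Real.pi * (2 * A / P) * (α * t - (m : ℝ)) =
        -(A * ((2 * Real.pi / P) * (m : ℝ) - t)) := by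
      rw [hα]; field_simp; ring
    have hco : Real.pi * (α * t - (m : ℝ)) =
        -(P / 2) * ((2 * Real.pi / P) * (m : ℝ) - t) := by
      rw [hα]; field_simp; ring
    have hu0 : (2 * Real.pi / P) * (m : ℝ) - t ≠ 0 := hu m hm
    rw [harg, Real.sin_neg, hco]
    rw [show P / (-(P / 2) * ((2 * Real.pi / P) * (m : ℝ) - t))
        = -(2 / ((2 * Real.pi / P) * (m : ℝ) - t)) from by
      field_simp]
    ring
  rw [hsin]
  ring
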